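/- Let G₁ and G₂ be finite simple graphs on disjoint vertex sets V₁ and V₂, and let G = G₁ + G₂ be their join. Let ρᵢ : 𝕜[x_S : S a stable set of Gᵢ] → 𝕜[x_S : S a stable set of G] (i = 1, 2) be the 𝕜-algebra maps induced by regarding each stable set of Gᵢ as a stable set of G. Then the toric ideal of the stable set ring of G splits as J_G = ρ₁(J_{G₁}) + ρ₂(J_{G₂}), i.e. J_G equals the ideal generated by the images of J_{G₁} and J_{G₂}. -/

import Mathlib

open MvPolynomial

/-- The join `G₁ + G₂` of two graphs on disjoint vertex sets: keep all edges of
`G₁` and `G₂` and connect every vertex of `G₁` to every vertex of `G₂`. -/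
def graphJoin {V₁ V₂ : Type*} (G₁ : SimpleGraph V₁) (G₂ : SimpleGraph V₂) :
    SimpleGraph (V₁ ⊕ V₂) where
  Adj x y :=
    match x, y with
    | Sum.inl a, Sum.inl b => G₁.Adj a b
    | Sum.inr a, Sum.inr b => G₂.Adj a b
    | _, _ => True
  symm := ⟨by rintro (a | a) (b | b) h <;> simp_all [SimpleGraph.adj_comm]⟩
  loopless := ⟨by rintro (a | a) h <;> exact SimpleGraph.irrefl _ h⟩

/-- `S` is a stable (independent) set of `G`. -/
def IsStableSet {V : Type*} (G : SimpleGraph V) (S : Finset V) : Prop :=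
  ∀ v ∈ S, ∀ w ∈ S, ¬ G.Adj v w

/-- The index type of the variables of the stable set ring: the stable sets of `G`. -/
def StabIdx {V : Type*} (G : SimpleGraph V) : Type _ := {S : Finset V // IsStableSet G S}

/-- The defining map `ψ_G` of the stable set ring, sending `x_S` to `(∏_{v ∈ S} t_v) t_∞`
(the extra variable `t_∞` is indexed by `none`). -/
noncomputable def stabRingMap (𝕜 : Type*) [Field 𝕜] {V : Type*} (G : SimpleGraph V) :
    MvPolynomial (StabIdx G) 𝕜 →ₐ[𝕜] MvPolynomial (Option V) 𝕜 :=
  aeval (fun S : StabIdx G => (∏ v ∈ S.1, X (some v)) * X (none : Option V))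

/-- The toric ideal `J_G` of the stable set ring of `G`. -/
noncomputable def stabToricIdeal (𝕜 : Type*) [Field 𝕜] {V : Type*} (G : SimpleGraph V) :
    Ideal (MvPolynomial (StabIdx G) 𝕜) :=
  RingHom.ker (stabRingMap 𝕜 G).toRingHom

/-- A stable set of `G₁` is a stable set of the join `G₁ + G₂`. -/
def stabInclLeft {V₁ V₂ : Type*} (G₁ : SimpleGraph V₁) (G₂ : SimpleGraph V₂) :
    StabIdx G₁ → StabIdx (graphJoin G₁ G₂) := fun S =>
  ⟨S.1.map ⟨Sum.inl, Sum.inl_injective⟩, by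
    intro v hv w hw
    simp only [Finset.mem_map, Function.Embedding.coeFn_mk] at hv hw
    obtain ⟨a, ha, rfl⟩ := hv
    obtain ⟨b, hb, rfl⟩ := hw
    exact S.2 a ha b hb⟩

/-- A stable set of `G₂` is a stable set of the join `G₁ + G₂`. -/
def stabInclRight {V₁ V₂ : Type*} (G₁ : SimpleGraph V₁) (G₂ : SimpleGraph V₂) :
    StabIdx G₂ → StabIdx (graphJoin G₁ G₂) := fun S =>
  ⟨S.1.map ⟨Sum.inr, Sum.inr_injective⟩, by
    intro v hv w hw
    simp only [Finset.mem_map, Function.Embedding.coeFn_mk] at hv hw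
    obtain ⟨a, ha, rfl⟩ := hv
    obtain ⟨b, hb, rfl⟩ := hw
    exact S.2 a ha b hb⟩


namespace StabSplitAux

variable {𝕜 : Type*} [Field 𝕜]

/-- weight of a stable set: exponent vector of `ψ(x_S)`. -/
noncomputable def wt {V : Type*} (S : Finset V) : Option V →₀ ℕ :=
  (∑ v ∈ S, Finsupp.single (some v) 1) + Finsupp.single none 1

/-- exponent map: `ψ(X^e) = X^(expMap e)`. -/
noncomputable def expMap {V : Type*} {G : SimpleGraph V} (e : StabIdx G →₀ ℕ) :
    Option V →₀ ℕ :=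
  e.sum fun S k => k • wt S.1

lemma expMap_add {V : Type*} {G : SimpleGraph V} (a b : StabIdx G →₀ ℕ) :
    expMap (G := G) (a + b) = expMap a + expMap b := by
  unfold expMap
  exact Finsupp.sum_add_index' (fun S => zero_smul _ _) (fun S k l => add_smul k l _)

lemma expMap_single {V : Type*} {G : SimpleGraph V} (S : StabIdx G) (k : ℕ) :
    expMap (G := G) (Finsupp.single S k) = k • wt S.1 :=
  Finsupp.sum_single_index (zero_smul _ _)

lemma wt_none {V : Type*} (S : Finset V) : wt S none = 1 := by
  simp [wt, Finsupp.sum_apply, Finsupp.single_apply]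

lemma expMap_none {V : Type*} {G : SimpleGraph V} (e : StabIdx G →₀ ℕ) :
    expMap (G := G) e none = e.sum fun _ k => k := by
  unfold expMap
  rw [Finsupp.sum_apply]
  refine Finsupp.sum_congr fun S _ => ?_
  simp [wt_none]

lemma prod_X_monomial {α β : Type*} (s : Finset α) (f : α → β) :
    (∏ v ∈ s, (X (f v) : MvPolynomial β 𝕜)) =
      monomial (∑ v ∈ s, Finsupp.single (f v) 1) 1 := by
  classical
  induction s using Finset.induction with
  | empty => simp
  | insert _ _ h ih =>
      rw [Finset.prod_insert h, Finset.sum_insert h, ih]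
      rw [X, monomial_mul, one_mul]

lemma psi_X {V : Type*} (G : SimpleGraph V) (S : StabIdx G) :
    stabRingMap 𝕜 G (X S) = monomial (wt S.1) 1 := by
  rw [stabRingMap, aeval_X, prod_X_monomial, wt, X, monomial_mul, one_mul]

lemma psi_monomial {V : Type*} (G : SimpleGraph V) (e : StabIdx G →₀ ℕ) (c : 𝕜) :
    stabRingMap 𝕜 G (monomial e c) = monomial (expMap e) c := by
  induction e using Finsupp.induction with
  | zero => simp [expMap]
  | single_add S k e hS hk ih =>
      have h1 : (monomial (Finsupp.single S k + e) c : MvPolynomial (StabIdx G) 𝕜) =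
          monomial (Finsupp.single S k) 1 * monomial e c := by
        rw [monomial_mul, one_mul]
      rw [h1, map_mul, ih, ← X_pow_eq_monomial, map_pow, psi_X, monomial_pow, one_pow,
        monomial_mul, one_mul, expMap_add, expMap_single]

/-- The empty stable set. -/
def stabEmpty {V : Type*} (G : SimpleGraph V) : StabIdx G :=
  ⟨∅, fun v hv => by simp at hv⟩

variable {V₁ V₂ : Type*} (G₁ : SimpleGraph V₁) (G₂ : SimpleGraph V₂)

lemma inclLeft_injective : Function.Injective (stabInclLeft G₁ G₂) := by
  intro S T h
  apply Subtype.ext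
  have := congrArg Subtype.val h
  exact Finset.map_injective _ this

lemma inclRight_injective : Function.Injective (stabInclRight G₁ G₂) := by
  intro S T h
  apply Subtype.ext
  have := congrArg Subtype.val h
  exact Finset.map_injective _ this

lemma inclLeft_empty : stabInclLeft G₁ G₂ (stabEmpty G₁) = stabEmpty (graphJoin G₁ G₂) := by
  apply Subtype.ext; simp [stabInclLeft, stabEmpty]

lemma inclRight_empty : stabInclRight G₁ G₂ (stabEmpty G₂) = stabEmpty (graphJoin G₁ G₂) := by
  apply Subtype.ext; simp [stabInclRight, stabEmpty]

lemma stab_classify (S : StabIdx (graphJoin G₁ G₂)) :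
    (∃ T, stabInclLeft G₁ G₂ T = S) ∨ (∃ T, stabInclRight G₁ G₂ T = S) := by
  classical
  by_cases h : ∀ x ∈ S.1, ∃ a, x = Sum.inl a
  · left
    have hst : IsStableSet G₁ (S.1.preimage Sum.inl Sum.inl_injective.injOn) := by
      intro v hv w hw hadj
      rw [Finset.mem_preimage] at hv hw
      exact S.2 _ hv _ hw hadj
    refine ⟨⟨_, hst⟩, ?_⟩
    apply Subtype.ext
    show (S.1.preimage Sum.inl Sum.inl_injective.injOn).map ⟨Sum.inl, Sum.inl_injective⟩ = S.1
    ext x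
    simp only [Finset.mem_map, Finset.mem_preimage, Function.Embedding.coeFn_mk]
    constructor
    · rintro ⟨a, ha, rfl⟩; exact ha
    · intro hx
      obtain ⟨a, rfl⟩ := h x hx
      exact ⟨a, hx, rfl⟩
  · right
    push_neg at h
    obtain ⟨x, hx, hxl⟩ := h
    obtain ⟨b, rfl⟩ : ∃ b, x = Sum.inr b := by
      cases x with
      | inl a => exact absurd rfl (hxl a)
      | inr b => exact ⟨b, rfl⟩
    have hall : ∀ y ∈ S.1, ∃ c, y = Sum.inr c := by
      intro y hy
      cases y with
      | inl a =>
          exfalso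
          exact S.2 _ hy _ hx (by show True; trivial)
      | inr c => exact ⟨c, rfl⟩
    have hst : IsStableSet G₂ (S.1.preimage Sum.inr Sum.inr_injective.injOn) := by
      intro v hv w hw hadj
      rw [Finset.mem_preimage] at hv hw
      exact S.2 _ hv _ hw hadj
    refine ⟨⟨_, hst⟩, ?_⟩
    apply Subtype.ext
    show (S.1.preimage Sum.inr Sum.inr_injective.injOn).map ⟨Sum.inr, Sum.inr_injective⟩ = S.1
    ext y
    simp only [Finset.mem_map, Finset.mem_preimage, Function.Embedding.coeFn_mk]
    constructor
    · rintro ⟨c, hc, rfl⟩; exact hc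
    · intro hy
      obtain ⟨c, rfl⟩ := hall y hy
      exact ⟨c, hy, rfl⟩

open Classical in
/-- classify back to the left factor. -/
noncomputable def cL : StabIdx (graphJoin G₁ G₂) → StabIdx G₁ := fun S =>
  if h : ∃ T, stabInclLeft G₁ G₂ T = S then h.choose else stabEmpty G₁

open Classical in
noncomputable def cR : StabIdx (graphJoin G₁ G₂) → StabIdx G₂ := fun S =>
  if h : ∃ T, stabInclRight G₁ G₂ T = S then h.choose else stabEmpty G₂

lemma cL_inclL (T : StabIdx G₁) : cL G₁ G₂ (stabInclLeft G₁ G₂ T) = T := by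
  unfold cL
  have h : ∃ T', stabInclLeft G₁ G₂ T' = stabInclLeft G₁ G₂ T := ⟨T, rfl⟩
  rw [dif_pos h]
  exact inclLeft_injective G₁ G₂ h.choose_spec

lemma cR_inclR (T : StabIdx G₂) : cR G₁ G₂ (stabInclRight G₁ G₂ T) = T := by
  unfold cR
  have h : ∃ T', stabInclRight G₁ G₂ T' = stabInclRight G₁ G₂ T := ⟨T, rfl⟩
  rw [dif_pos h]
  exact inclRight_injective G₁ G₂ h.choose_spec

lemma cL_inclR (T : StabIdx G₂) : cL G₁ G₂ (stabInclRight G₁ G₂ T) = stabEmpty G₁ := by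
  unfold cL
  by_cases h : ∃ T', stabInclLeft G₁ G₂ T' = stabInclRight G₁ G₂ T
  · rw [dif_pos h]
    -- then T' and T are both empty
    obtain ⟨T', hT'⟩ := h
    have hval := congrArg Subtype.val hT'
    have hT'e : T'.1 = ∅ := by
      by_contra hne
      obtain ⟨a, ha⟩ := Finset.nonempty_iff_ne_empty.mpr hne
      have h1 : Sum.inl a ∈ (stabInclLeft G₁ G₂ T').1 := Finset.mem_map_of_mem _ ha
      rw [hval] at h1
      simp [stabInclRight] at h1
    have : stabInclLeft G₁ G₂ T' = stabInclLeft G₁ G₂ (stabEmpty G₁) := by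
      apply Subtype.ext
      simp [stabInclLeft, stabEmpty, hT'e]
    have h2 : (⟨T', hT'⟩ : ∃ T', stabInclLeft G₁ G₂ T' = stabInclRight G₁ G₂ T).choose = T' →
        True := fun _ => trivial
    -- choose_spec gives stabInclLeft choose = inclRight T = inclLeft T'; injectivity
    have hspec := (Exists.intro T' hT' : ∃ T'', stabInclLeft G₁ G₂ T'' = stabInclRight G₁ G₂ T).choose_spec
    have : stabInclLeft G₁ G₂ (Exists.intro T' hT' : ∃ T'', stabInclLeft G₁ G₂ T'' = stabInclRight G₁ G₂ T).choose
        = stabInclLeft G₁ G₂ T' := hspec.trans hT'.symm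
    have hc := inclLeft_injective G₁ G₂ this
    rw [hc]
    apply Subtype.ext
    exact hT'e
  · rw [dif_neg h]

lemma cR_inclL (T : StabIdx G₁) : cR G₁ G₂ (stabInclLeft G₁ G₂ T) = stabEmpty G₂ := by
  unfold cR
  by_cases h : ∃ T', stabInclRight G₁ G₂ T' = stabInclLeft G₁ G₂ T
  · rw [dif_pos h]
    obtain ⟨T', hT'⟩ := h
    have hval := congrArg Subtype.val hT'
    have hT'e : T'.1 = ∅ := by
      by_contra hne
      obtain ⟨a, ha⟩ := Finset.nonempty_iff_ne_empty.mpr hne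
      have h1 : Sum.inr a ∈ (stabInclRight G₁ G₂ T').1 := Finset.mem_map_of_mem _ ha
      rw [hval] at h1
      simp [stabInclLeft] at h1
    have hspec := (Exists.intro T' hT' : ∃ T'', stabInclRight G₁ G₂ T'' = stabInclLeft G₁ G₂ T).choose_spec
    have : stabInclRight G₁ G₂ (Exists.intro T' hT' : ∃ T'', stabInclRight G₁ G₂ T'' = stabInclLeft G₁ G₂ T).choose
        = stabInclRight G₁ G₂ T' := hspec.trans hT'.symm
    have hc := inclRight_injective G₁ G₂ this
    rw [hc]
    apply Subtype.ext
    exact hT'e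
  · rw [dif_neg h]

lemma monomial_add_one {σ : Type*} (a b : σ →₀ ℕ) :
    (monomial (a + b) (1 : 𝕜)) = monomial a 1 * monomial b 1 := by
  rw [monomial_mul, one_mul]

lemma decomp (d : StabIdx (graphJoin G₁ G₂) →₀ ℕ) :
    ∃ (dL : StabIdx G₁ →₀ ℕ) (dR : StabIdx G₂ →₀ ℕ),
      (monomial d 1 : MvPolynomial (StabIdx (graphJoin G₁ G₂)) 𝕜) =
        rename (stabInclLeft G₁ G₂) (monomial dL 1) *
          rename (stabInclRight G₁ G₂) (monomial dR 1) ∧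
      Finsupp.mapDomain (cL G₁ G₂) d
        = dL + Finsupp.single (stabEmpty G₁) (dR.sum fun _ k => k) ∧
      Finsupp.mapDomain (cR G₁ G₂) d
        = dR + Finsupp.single (stabEmpty G₂) (dL.sum fun _ k => k) := by
  induction d using Finsupp.induction with
  | zero => exact ⟨0, 0, by simp, by simp, by simp⟩
  | single_add S k d hS hk ih =>
    obtain ⟨dL, dR, h1, h2, h3⟩ := ih
    rcases stab_classify G₁ G₂ S with ⟨T, rfl⟩ | ⟨T, rfl⟩
    · refine ⟨Finsupp.single T k + dL, dR, ?_, ?_, ?_⟩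
      · simp only [monomial_add_one, map_mul, h1, rename_monomial, Finsupp.mapDomain_single]
        ring
      · rw [Finsupp.mapDomain_add, Finsupp.mapDomain_single, cL_inclL, h2]
        abel
      · rw [Finsupp.mapDomain_add, Finsupp.mapDomain_single, cR_inclL, h3,
          Finsupp.sum_add_index' (fun _ => rfl) (fun _ _ _ => rfl),
          Finsupp.sum_single_index rfl, Finsupp.single_add]
        abel
    · refine ⟨dL, Finsupp.single T k + dR, ?_, ?_, ?_⟩
      · simp only [monomial_add_one, map_mul, h1, rename_monomial, Finsupp.mapDomain_single]
        ring
      · rw [Finsupp.mapDomain_add, Finsupp.mapDomain_single, cL_inclR, h2,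
          Finsupp.sum_add_index' (fun _ => rfl) (fun _ _ _ => rfl),
          Finsupp.sum_single_index rfl, Finsupp.single_add]
        abel
      · rw [Finsupp.mapDomain_add, Finsupp.mapDomain_single, cR_inclR, h3]
        abel

lemma psi_comp_renameL :
    (stabRingMap 𝕜 (graphJoin G₁ G₂)).comp (rename (stabInclLeft G₁ G₂)) =
      (rename (Option.map Sum.inl)).comp (stabRingMap 𝕜 G₁) := by
  apply algHom_ext
  intro T
  simp only [AlgHom.comp_apply, rename_X, stabRingMap, aeval_X, map_mul, map_prod, rename_X]
  show (∏ v ∈ T.1.map ⟨Sum.inl, Sum.inl_injective⟩, X (some v)) * X (Option.map Sum.inl none) = _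
  rw [Finset.prod_map]
  simp

lemma psi_comp_renameR :
    (stabRingMap 𝕜 (graphJoin G₁ G₂)).comp (rename (stabInclRight G₁ G₂)) =
      (rename (Option.map Sum.inr)).comp (stabRingMap 𝕜 G₂) := by
  apply algHom_ext
  intro T
  simp only [AlgHom.comp_apply, rename_X, stabRingMap, aeval_X, map_mul, map_prod, rename_X]
  show (∏ v ∈ T.1.map ⟨Sum.inr, Sum.inr_injective⟩, X (some v)) * X (Option.map Sum.inr none) = _
  rw [Finset.prod_map]
  simp

/-- kill the right variables, remember only left variables and the total degree. -/
noncomputable def piL : MvPolynomial (Option (V₁ ⊕ V₂)) 𝕜 →ₐ[𝕜] MvPolynomial (Option V₁) 𝕜 :=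
  aeval fun o => match o with
    | none => X none
    | some (Sum.inl v) => X (some v)
    | some (Sum.inr _) => 1

noncomputable def piR : MvPolynomial (Option (V₁ ⊕ V₂)) 𝕜 →ₐ[𝕜] MvPolynomial (Option V₂) 𝕜 :=
  aeval fun o => match o with
    | none => X none
    | some (Sum.inr v) => X (some v)
    | some (Sum.inl _) => 1

lemma piL_comp :
    (piL (V₁ := V₁) (V₂ := V₂) (𝕜 := 𝕜)).comp (stabRingMap 𝕜 (graphJoin G₁ G₂)) =
      (stabRingMap 𝕜 G₁).comp (rename (cL G₁ G₂)) := by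
  apply algHom_ext
  intro S
  simp only [AlgHom.comp_apply, rename_X, stabRingMap, aeval_X, map_mul, map_prod]
  rcases stab_classify G₁ G₂ S with ⟨T, rfl⟩ | ⟨T, rfl⟩
  · rw [cL_inclL]
    show (∏ v ∈ T.1.map ⟨Sum.inl, Sum.inl_injective⟩, piL (V₁ := V₁) (V₂ := V₂) (𝕜 := 𝕜) (X (some v))) *
      piL (V₁ := V₁) (V₂ := V₂) (𝕜 := 𝕜) (X none) = _
    rw [Finset.prod_map]
    simp [piL, aeval_X]
  · rw [cL_inclR]
    show (∏ v ∈ T.1.map ⟨Sum.inr, Sum.inr_injective⟩, piL (V₁ := V₁) (V₂ := V₂) (𝕜 := 𝕜) (X (some v))) *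
      piL (V₁ := V₁) (V₂ := V₂) (𝕜 := 𝕜) (X none) = _
    rw [Finset.prod_map]
    simp [piL, aeval_X, stabEmpty]

lemma piR_comp :
    (piR (V₁ := V₁) (V₂ := V₂) (𝕜 := 𝕜)).comp (stabRingMap 𝕜 (graphJoin G₁ G₂)) =
      (stabRingMap 𝕜 G₂).comp (rename (cR G₁ G₂)) := by
  apply algHom_ext
  intro S
  simp only [AlgHom.comp_apply, rename_X, stabRingMap, aeval_X, map_mul, map_prod]
  rcases stab_classify G₁ G₂ S with ⟨T, rfl⟩ | ⟨T, rfl⟩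
  · rw [cR_inclL]
    show (∏ v ∈ T.1.map ⟨Sum.inl, Sum.inl_injective⟩, piR (V₁ := V₁) (V₂ := V₂) (𝕜 := 𝕜) (X (some v))) *
      piR (V₁ := V₁) (V₂ := V₂) (𝕜 := 𝕜) (X none) = _
    rw [Finset.prod_map]
    simp [piR, aeval_X, stabEmpty]
  · rw [cR_inclR]
    show (∏ v ∈ T.1.map ⟨Sum.inr, Sum.inr_injective⟩, piR (V₁ := V₁) (V₂ := V₂) (𝕜 := 𝕜) (X (some v))) *
      piR (V₁ := V₁) (V₂ := V₂) (𝕜 := 𝕜) (X none) = _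
    rw [Finset.prod_map]
    simp [piR, aeval_X]

variable (𝕜)

/-- The candidate splitting ideal. -/
noncomputable def joinIdeal : Ideal (MvPolynomial (StabIdx (graphJoin G₁ G₂)) 𝕜) :=
  Ideal.map (rename (stabInclLeft G₁ G₂) : MvPolynomial (StabIdx G₁) 𝕜 →ₐ[𝕜] _).toRingHom
      (stabToricIdeal 𝕜 G₁) ⊔
    Ideal.map (rename (stabInclRight G₁ G₂) : MvPolynomial (StabIdx G₂) 𝕜 →ₐ[𝕜] _).toRingHom
      (stabToricIdeal 𝕜 G₂)

lemma key_aux (dL d'L : StabIdx G₁ →₀ ℕ) (dR d'R : StabIdx G₂ →₀ ℕ)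
    (E1 : expMap (G := G₁) dL + (dR.sum fun _ k => k) • wt (∅ : Finset V₁)
        = expMap d'L + (d'R.sum fun _ k => k) • wt (∅ : Finset V₁))
    (E2 : expMap (G := G₂) dR + (dL.sum fun _ k => k) • wt (∅ : Finset V₂)
        = expMap d'R + (d'L.sum fun _ k => k) • wt (∅ : Finset V₂))
    (hle : d'L.sum (fun _ k => k) ≤ dL.sum fun _ k => k) :
    rename (stabInclLeft G₁ G₂) (monomial dL (1:𝕜)) *
        rename (stabInclRight G₁ G₂) (monomial dR 1) -
      rename (stabInclLeft G₁ G₂) (monomial d'L 1) *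
        rename (stabInclRight G₁ G₂) (monomial d'R 1) ∈ joinIdeal 𝕜 G₁ G₂ := by
  set σL := dL.sum fun _ k => k with hσL
  set σ'L := d'L.sum fun _ k => k with hσ'L
  set σR := dR.sum fun _ k => k with hσR
  set σ'R := d'R.sum fun _ k => k with hσ'R
  -- total degree equality
  have hdeg : σL + σR = σ'L + σ'R := by
    have := congrArg (fun (w : Option V₁ →₀ ℕ) => w none) E1
    simpa [Finsupp.add_apply, Finsupp.smul_apply, wt_none, expMap_none, hσL, hσ'L] using this
  set k := σL - σ'L with hk
  have hkL : σL = σ'L + k := by omega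
  have hkR : σ'R = σR + k := by omega
  -- left binomial
  have bin1 : (monomial dL (1:𝕜) - monomial (d'L + Finsupp.single (stabEmpty G₁) k) 1)
      ∈ stabToricIdeal 𝕜 G₁ := by
    have hE : expMap (G := G₁) dL = expMap (d'L + Finsupp.single (stabEmpty G₁) k) := by
      rw [expMap_add, expMap_single]
      have : expMap (G := G₁) dL + σR • wt (∅ : Finset V₁)
          = (expMap d'L + k • wt (∅ : Finset V₁)) + σR • wt (∅ : Finset V₁) := by
        rw [E1, hkR, add_smul]
        abel
      exact add_right_cancel this
    show _ ∈ RingHom.ker _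
    rw [RingHom.mem_ker]
    show stabRingMap 𝕜 G₁ _ = 0
    rw [map_sub, psi_monomial, psi_monomial, hE, sub_self]
  -- right binomial
  have bin2 : (monomial (dR + Finsupp.single (stabEmpty G₂) k) (1:𝕜) - monomial d'R 1)
      ∈ stabToricIdeal 𝕜 G₂ := by
    have hE : expMap (G := G₂) (dR + Finsupp.single (stabEmpty G₂) k) = expMap d'R := by
      rw [expMap_add, expMap_single]
      have : (expMap (G := G₂) dR + k • wt (∅ : Finset V₂)) + σ'L • wt (∅ : Finset V₂)
          = expMap d'R + σ'L • wt (∅ : Finset V₂) := by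
        rw [← E2, hkL, add_smul]
        abel
      exact add_right_cancel this
    show _ ∈ RingHom.ker _
    rw [RingHom.mem_ker]
    show stabRingMap 𝕜 G₂ _ = 0
    rw [map_sub, psi_monomial, psi_monomial, hE, sub_self]
  have m1 : (rename (stabInclLeft G₁ G₂) : MvPolynomial (StabIdx G₁) 𝕜 →ₐ[𝕜] _)
      (monomial dL 1 - monomial (d'L + Finsupp.single (stabEmpty G₁) k) 1) ∈
      joinIdeal 𝕜 G₁ G₂ :=
    Ideal.mem_sup_left (Ideal.mem_map_of_mem _ bin1)
  have m2 : (rename (stabInclRight G₁ G₂) : MvPolynomial (StabIdx G₂) 𝕜 →ₐ[𝕜] _)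
      (monomial (dR + Finsupp.single (stabEmpty G₂) k) 1 - monomial d'R 1) ∈
      joinIdeal 𝕜 G₁ G₂ :=
    Ideal.mem_sup_right (Ideal.mem_map_of_mem _ bin2)
  have hz : (rename (stabInclLeft G₁ G₂) : MvPolynomial (StabIdx G₁) 𝕜 →ₐ[𝕜] _)
        (monomial (Finsupp.single (stabEmpty G₁) k) 1)
      = (rename (stabInclRight G₁ G₂) : MvPolynomial (StabIdx G₂) 𝕜 →ₐ[𝕜] _)
        (monomial (Finsupp.single (stabEmpty G₂) k) 1) := by
    rw [rename_monomial, rename_monomial, Finsupp.mapDomain_single, Finsupp.mapDomain_single,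
      inclLeft_empty, inclRight_empty]
  have key : rename (stabInclLeft G₁ G₂) (monomial dL (1:𝕜)) *
        rename (stabInclRight G₁ G₂) (monomial dR 1) -
      rename (stabInclLeft G₁ G₂) (monomial d'L 1) *
        rename (stabInclRight G₁ G₂) (monomial d'R 1)
      = (rename (stabInclLeft G₁ G₂)
            (monomial dL 1 - monomial (d'L + Finsupp.single (stabEmpty G₁) k) 1)) *
          rename (stabInclRight G₁ G₂) (monomial dR 1) +
        rename (stabInclLeft G₁ G₂) (monomial d'L 1) *
          (rename (stabInclRight G₁ G₂)
            (monomial (dR + Finsupp.single (stabEmpty G₂) k) 1 - monomial d'R 1)) := by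
    rw [map_sub, map_sub, monomial_add_one, monomial_add_one, map_mul, map_mul, hz]
    ring
  rw [key]
  exact Ideal.add_mem _ (Ideal.mul_mem_right _ _ m1) (Ideal.mul_mem_left _ _ m2)

lemma exp_eq_of_mapDomain_L (d d' : StabIdx (graphJoin G₁ G₂) →₀ ℕ)
    (h : expMap (G := graphJoin G₁ G₂) d = expMap d') :
    expMap (G := G₁) (Finsupp.mapDomain (cL G₁ G₂) d)
      = expMap (Finsupp.mapDomain (cL G₁ G₂) d') := by
  have hmono : (monomial (expMap (G := G₁) (Finsupp.mapDomain (cL G₁ G₂) d)) (1:ℚ))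
      = monomial (expMap (Finsupp.mapDomain (cL G₁ G₂) d')) 1 := by
    rw [← psi_monomial, ← psi_monomial, ← rename_monomial, ← rename_monomial,
      ← AlgHom.comp_apply, ← AlgHom.comp_apply, ← piL_comp,
      AlgHom.comp_apply, AlgHom.comp_apply, psi_monomial, psi_monomial, h]
  exact monomial_left_injective one_ne_zero hmono

lemma exp_eq_of_mapDomain_R (d d' : StabIdx (graphJoin G₁ G₂) →₀ ℕ)
    (h : expMap (G := graphJoin G₁ G₂) d = expMap d') :
    expMap (G := G₂) (Finsupp.mapDomain (cR G₁ G₂) d)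
      = expMap (Finsupp.mapDomain (cR G₁ G₂) d') := by
  have hmono : (monomial (expMap (G := G₂) (Finsupp.mapDomain (cR G₁ G₂) d)) (1:ℚ))
      = monomial (expMap (Finsupp.mapDomain (cR G₁ G₂) d')) 1 := by
    rw [← psi_monomial, ← psi_monomial, ← rename_monomial, ← rename_monomial,
      ← AlgHom.comp_apply, ← AlgHom.comp_apply, ← piR_comp,
      AlgHom.comp_apply, AlgHom.comp_apply, psi_monomial, psi_monomial, h]
  exact monomial_left_injective one_ne_zero hmono

lemma key_binomial (d d' : StabIdx (graphJoin G₁ G₂) →₀ ℕ)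
    (h : expMap (G := graphJoin G₁ G₂) d = expMap d') :
    (monomial d 1 - monomial d' 1 : MvPolynomial (StabIdx (graphJoin G₁ G₂)) 𝕜)
      ∈ joinIdeal 𝕜 G₁ G₂ := by
  obtain ⟨dL, dR, f1, hL, hR⟩ := decomp (𝕜 := 𝕜) G₁ G₂ d
  obtain ⟨d'L, d'R, f1', hL', hR'⟩ := decomp (𝕜 := 𝕜) G₁ G₂ d'
  have smul_eq : ∀ (n : ℕ), expMap (G := G₁) (Finsupp.single (stabEmpty G₁) n)
      = n • wt (∅ : Finset V₁) := fun n => expMap_single _ _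
  have smul_eq₂ : ∀ (n : ℕ), expMap (G := G₂) (Finsupp.single (stabEmpty G₂) n)
      = n • wt (∅ : Finset V₂) := fun n => expMap_single _ _
  have E1 : expMap (G := G₁) dL + (dR.sum fun _ k => k) • wt (∅ : Finset V₁)
      = expMap d'L + (d'R.sum fun _ k => k) • wt (∅ : Finset V₁) := by
    have := exp_eq_of_mapDomain_L G₁ G₂ d d' h
    rwa [hL, hL', expMap_add, expMap_add, smul_eq, smul_eq] at this
  have E2 : expMap (G := G₂) dR + (dL.sum fun _ k => k) • wt (∅ : Finset V₂)
      = expMap d'R + (d'L.sum fun _ k => k) • wt (∅ : Finset V₂) := by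
    have := exp_eq_of_mapDomain_R G₁ G₂ d d' h
    rwa [hR, hR', expMap_add, expMap_add, smul_eq₂, smul_eq₂] at this
  rw [f1, f1']
  rcases le_total (d'L.sum fun _ k => k) (dL.sum fun _ k => k) with hle | hle
  · exact key_aux 𝕜 G₁ G₂ dL d'L dR d'R E1 E2 hle
  · have := key_aux 𝕜 G₁ G₂ d'L dL d'R dR E1.symm E2.symm hle
    have hneg := neg_mem this
    rwa [neg_sub] at hneg

end StabSplitAux

open StabSplitAux in
theorem stable_set_ring_toric_splitting (𝕜 : Type*) [Field 𝕜]
    {V₁ V₂ : Type*} [Fintype V₁] [Fintype V₂]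
    (G₁ : SimpleGraph V₁) (G₂ : SimpleGraph V₂) :
    stabToricIdeal 𝕜 (graphJoin G₁ G₂) =
      Ideal.map (rename (stabInclLeft G₁ G₂) : MvPolynomial (StabIdx G₁) 𝕜 →ₐ[𝕜] _).toRingHom
          (stabToricIdeal 𝕜 G₁) ⊔
        Ideal.map (rename (stabInclRight G₁ G₂) : MvPolynomial (StabIdx G₂) 𝕜 →ₐ[𝕜] _).toRingHom
          (stabToricIdeal 𝕜 G₂) := by
  classical
  show stabToricIdeal 𝕜 (graphJoin G₁ G₂) = joinIdeal 𝕜 G₁ G₂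
  have hIJ : joinIdeal 𝕜 G₁ G₂ ≤ stabToricIdeal 𝕜 (graphJoin G₁ G₂) := by
    apply sup_le
    · rw [Ideal.map_le_iff_le_comap]
      intro p hp
      rw [Ideal.mem_comap]
      have hp0 : stabRingMap 𝕜 G₁ p = 0 := RingHom.mem_ker.mp hp
      have : stabRingMap 𝕜 (graphJoin G₁ G₂) ((rename (stabInclLeft G₁ G₂)) p) = 0 := by
        have hc := DFunLike.congr_fun (psi_comp_renameL G₁ G₂ (𝕜 := 𝕜)) p
        simp only [AlgHom.comp_apply] at hc
        rw [hc, hp0, map_zero]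
      exact RingHom.mem_ker.mpr this
    · rw [Ideal.map_le_iff_le_comap]
      intro p hp
      rw [Ideal.mem_comap]
      have hp0 : stabRingMap 𝕜 G₂ p = 0 := RingHom.mem_ker.mp hp
      have : stabRingMap 𝕜 (graphJoin G₁ G₂) ((rename (stabInclRight G₁ G₂)) p) = 0 := by
        have hc := DFunLike.congr_fun (psi_comp_renameR G₁ G₂ (𝕜 := 𝕜)) p
        simp only [AlgHom.comp_apply] at hc
        rw [hc, hp0, map_zero]
      exact RingHom.mem_ker.mpr this
  refine le_antisymm ?_ hIJ
  intro f hf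
  have hf0 : stabRingMap 𝕜 (graphJoin G₁ G₂) f = 0 := RingHom.mem_ker.mp hf
  set N : (StabIdx (graphJoin G₁ G₂) →₀ ℕ) → (StabIdx (graphJoin G₁ G₂) →₀ ℕ) :=
    fun e => Function.invFun (expMap (G := graphJoin G₁ G₂)) (expMap e) with hN
  have hNexp : ∀ e, expMap (G := graphJoin G₁ G₂) (N e) = expMap e := fun e =>
    Function.invFun_eq ⟨e, rfl⟩
  have hNcong : ∀ e e', expMap (G := graphJoin G₁ G₂) e = expMap e' → N e = N e' := by
    intro e e' hh
    simp only [hN, hh]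
  have hNN : ∀ e, N (N e) = N e := fun e => hNcong _ _ (hNexp e)
  set g : MvPolynomial (StabIdx (graphJoin G₁ G₂)) 𝕜 :=
    ∑ e ∈ f.support, monomial (N e) (coeff e f) with hg
  have hfg : f - g ∈ joinIdeal 𝕜 G₁ G₂ := by
    have hf' : f = ∑ e ∈ f.support, monomial e (coeff e f) :=
      (support_sum_monomial_coeff f).symm
    rw [hg]
    nth_rewrite 1 [hf']
    rw [← Finset.sum_sub_distrib]
    apply Ideal.sum_mem
    intro e he
    have hterm : monomial e (coeff e f) - monomial (N e) (coeff e f)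
        = C (coeff e f) * (monomial e 1 - monomial (N e) 1) := by
      rw [mul_sub, C_mul_monomial, C_mul_monomial, mul_one]
    rw [hterm]
    exact Ideal.mul_mem_left _ _ (key_binomial 𝕜 G₁ G₂ e (N e) (hNexp e).symm)
  have hpsig : stabRingMap 𝕜 (graphJoin G₁ G₂) g = 0 := by
    have h1 : stabRingMap 𝕜 (graphJoin G₁ G₂) (f - g) = 0 := RingHom.mem_ker.mp (hIJ hfg)
    rw [map_sub, hf0, zero_sub, neg_eq_zero] at h1
    exact h1
  have hg0 : g = 0 := by
    apply MvPolynomial.ext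
    intro m
    rw [coeff_zero, hg, coeff_sum]
    simp only [coeff_monomial]
    by_cases hm : N m = m
    · have hψ : stabRingMap 𝕜 (graphJoin G₁ G₂) g
          = ∑ e ∈ f.support, monomial (expMap e) (coeff e f) := by
        rw [hg, map_sum]
        refine Finset.sum_congr rfl fun e _ => ?_
        rw [psi_monomial, hNexp]
      have hiff : ∀ e, (N e = m) ↔ (expMap (G := graphJoin G₁ G₂) e = expMap m) := by
        intro e
        constructor
        · intro h; rw [← h, hNexp]
        · intro h; rw [hNcong e m h, hm]
      calc ∑ e ∈ f.support, (if N e = m then coeff e f else 0)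
          = ∑ e ∈ f.support,
              (if expMap (G := graphJoin G₁ G₂) e = expMap m then coeff e f else 0) := by
            refine Finset.sum_congr rfl fun e _ => ?_
            simp only [hiff e]
        _ = coeff (expMap m) (stabRingMap 𝕜 (graphJoin G₁ G₂) g) := by
            rw [hψ, coeff_sum]
            exact Finset.sum_congr rfl fun e _ => (coeff_monomial _ _ _).symm
        _ = 0 := by rw [hpsig, coeff_zero]
    · refine Finset.sum_eq_zero fun e he => ?_
      rw [if_neg]
      intro hcon
      exact hm (by rw [← hcon, hNN])
  rwa [hg0, sub_zero] at hfg
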